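/- Let K be a field and let α, β ∈ ℕ^{2ℓ}. Then ψ₀([α] − [β]) = 0 if and only if both of the following hold: (i) α_i + α_{2ℓ+1−i} = β_i + β_{2ℓ+1−i} for all i = 1,…,ℓ, and (ii) ∑_{i=ℓ+1}^{2ℓ} ζ_i·α_i = ∑_{i=ℓ+1}^{2ℓ} ζ_i·β_i. -/

import Mathlib

open MvPolynomial

noncomputable section



/-- Index in `Fin (2*ℓ)` of the coefficient `a_k` (0-indexed position `k`). -/
def aIdx (l : ℕ) (k : Fin l) : Fin (2 * l) :=
  ⟨(k : ℕ), by have := k.isLt; omega⟩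

/-- Index in `Fin (2*ℓ)` of the coefficient `b_k` (0-indexed position `2ℓ-1-k`),
    matching the ordering `(a₁,…,a_ℓ, b_ℓ,…,b₁)`. -/
def bIdx (l : ℕ) (k : Fin l) : Fin (2 * l) :=
  ⟨2 * l - 1 - (k : ℕ), by have := k.isLt; omega⟩

/-- The vector `ζ = (p₁−q₁, …, p_ℓ−q_ℓ, q_ℓ−p_ℓ, …, q₁−p₁)`. -/
def zeta {l : ℕ} (p : Fin l → ℤ) (q : Fin l → ℕ) : Fin (2 * l) → ℤ := fun i =>
  if h : (i : ℕ) < l then p ⟨(i : ℕ), h⟩ - (q ⟨(i : ℕ), h⟩ : ℤ)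
  else (q ⟨2 * l - 1 - (i : ℕ), by have := i.isLt; omega⟩ : ℤ) -
    p ⟨2 * l - 1 - (i : ℕ), by have := i.isLt; omega⟩

/-- Dot product of an integer vector with a vector of natural numbers. -/
def zdot {n : ℕ} (z : Fin n → ℤ) (v : Fin n → ℕ) : ℤ := ∑ i, z i * (v i : ℤ)

/-- Reversal (involution) of a vector: `ν̂ = (ν_{2ℓ}, …, ν₁)`. -/
def revVec {n : ℕ} {α : Type*} (v : Fin n → α) : Fin n → α := fun i => v i.rev

/-- The monomial `[ν] = a₁^{ν₁}⋯a_ℓ^{ν_ℓ}·b_ℓ^{ν_{ℓ+1}}⋯b₁^{ν_{2ℓ}}` in the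
    polynomial ring in `2ℓ` variables. -/
def monX {K : Type*} [CommSemiring K] {n : ℕ} (v : Fin n → ℕ) :
    MvPolynomial (Fin n) K :=
  ∏ i, (X i) ^ (v i)

/-- Time-reversibility of the coefficient vector `x = (a,b)`: there is `γ ≠ 0`
    with `b_k = γ^{p_k−q_k}·a_k` for all `k`. -/
def TimeRev {K : Type*} [Field K] {l : ℕ} (p : Fin l → ℤ) (q : Fin l → ℕ)
    (x : Fin (2 * l) → K) : Prop :=
  ∃ γ : K, γ ≠ 0 ∧ ∀ k : Fin l, x (bIdx l k) = γ ^ (p k - (q k : ℤ)) * x (aIdx l k)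

/-- The Sibirsky ideal `I_S = ⟨[ν] − [ν̂] : ν ∈ M⟩`. -/
def sibirsky (K : Type*) [CommRing K] {l : ℕ} (p : Fin l → ℤ) (q : Fin l → ℕ) :
    Ideal (MvPolynomial (Fin (2 * l)) K) :=
  Ideal.span {f | ∃ v : Fin (2 * l) → ℕ,
    zdot (zeta p q) v = 0 ∧ f = monX v - monX (revVec v)}

/-- The homomorphism `ψ₀ : K[a₁,…,a_ℓ,b_ℓ,…,b₁] → K(γ,t₁,…,t_ℓ)`,
    `a_k ↦ t_k`, `b_k ↦ γ^{p_k−q_k}·t_k`; here `γ` is the image of `X 0` and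
    `t_k` the image of `X k.succ` in the fraction field of `K[X₀,…,X_ℓ]`. -/
def psi0 {K : Type*} [Field K] {l : ℕ} (p : Fin l → ℤ) (q : Fin l → ℕ) :
    MvPolynomial (Fin (2 * l)) K →ₐ[K] FractionRing (MvPolynomial (Fin (l + 1)) K) :=
  aeval fun i =>
    if h : (i : ℕ) < l then
      algebraMap (MvPolynomial (Fin (l + 1)) K)
        (FractionRing (MvPolynomial (Fin (l + 1)) K)) (X (Fin.succ ⟨(i : ℕ), h⟩))
    else
      (algebraMap (MvPolynomial (Fin (l + 1)) K)
          (FractionRing (MvPolynomial (Fin (l + 1)) K)) (X 0)) ^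
        (p ⟨2 * l - 1 - (i : ℕ), by have := i.isLt; omega⟩ -
          (q ⟨2 * l - 1 - (i : ℕ), by have := i.isLt; omega⟩ : ℤ)) *
      algebraMap (MvPolynomial (Fin (l + 1)) K)
        (FractionRing (MvPolynomial (Fin (l + 1)) K))
        (X (Fin.succ ⟨2 * l - 1 - (i : ℕ), by have := i.isLt; omega⟩))

/-- The linear map `U_η`, multiplying the coordinate `a_k` by `η^{q_k−p_k}` and the
    coordinate `b_k` by `η^{p_k−q_k}`. -/
def Ueta {K : Type*} [Field K] {l : ℕ} (p : Fin l → ℤ) (q : Fin l → ℕ) (η : K)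
    (x : Fin (2 * l) → K) : Fin (2 * l) → K := fun i =>
  if h : (i : ℕ) < l then η ^ ((q ⟨(i : ℕ), h⟩ : ℤ) - p ⟨(i : ℕ), h⟩) * x i
  else η ^ (p ⟨2 * l - 1 - (i : ℕ), by have := i.isLt; omega⟩ -
    (q ⟨2 * l - 1 - (i : ℕ), by have := i.isLt; omega⟩ : ℤ)) * x i

/-- The orbit of `x` under the group `{U_η : η ≠ 0}`. -/
def orbitU {K : Type*} [Field K] {l : ℕ} (p : Fin l → ℤ) (q : Fin l → ℕ)
    (x : Fin (2 * l) → K) : Set (Fin (2 * l) → K) :=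
  {y | ∃ η : K, η ≠ 0 ∧ y = Ueta p q η x}


section Aux

/-- Split equiv. -/
def splitEquiv' (l : ℕ) : Fin l ⊕ Fin l ≃ Fin (2 * l) where
  toFun := Sum.elim (fun k => ⟨(k:ℕ), by have := k.isLt; omega⟩)
    (fun k => ⟨2 * l - 1 - (k:ℕ), by have := k.isLt; omega⟩)
  invFun i := if h : (i : ℕ) < l then Sum.inl ⟨i, h⟩
    else Sum.inr ⟨2 * l - 1 - i, by have := i.isLt; omega⟩
  left_inv s := by
    rcases s with k | k
    · simp
    · have hk := k.isLt
      simp only [Sum.elim_inr]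
      refine (dif_neg (show ¬ 2 * l - 1 - (k : ℕ) < l by omega)).trans ?_
      congr 1; ext; simp; omega
  right_inv i := by
    by_cases h : (i : ℕ) < l
    · dsimp only
      rw [dif_pos h]
      simp
    · have := i.isLt
      dsimp only
      rw [dif_neg h]
      simp only [Sum.elim_inr]
      ext; simp; omega

lemma prod_split' {M : Type*} [CommMonoid M] {l : ℕ} (g : Fin (2 * l) → M) :
    ∏ i, g i = (∏ k : Fin l, g ⟨(k:ℕ), by have := k.isLt; omega⟩) *
      ∏ k : Fin l, g ⟨2 * l - 1 - (k:ℕ), by have := k.isLt; omega⟩ := by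
  rw [← Fintype.prod_equiv (splitEquiv' l) (fun s => g (splitEquiv' l s)) g (fun _ => rfl)]
  rw [Fintype.prod_sum_type]
  rfl

lemma zpow_sum' {G₀ : Type*} [CommGroupWithZero G₀] (x : G₀) (hx : x ≠ 0) {ι : Type*}
    (s : Finset ι) (f : ι → ℤ) :
    x ^ (∑ i ∈ s, f i) = ∏ i ∈ s, x ^ f i := by
  classical
  induction s using Finset.induction with
  | empty => simp
  | @insert a s h ih => rw [Finset.sum_insert h, Finset.prod_insert h, zpow_add₀ hx, ih]

lemma indep' {K : Type*} [Field K] {n : ℕ} (c : Fin n → ℤ)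
    (h : ∏ i, (algebraMap (MvPolynomial (Fin n) K)
      (FractionRing (MvPolynomial (Fin n) K)) (X i)) ^ (c i) = 1) :
    ∀ i, c i = 0 := by
  set A := MvPolynomial (Fin n) K
  set φ := algebraMap A (FractionRing A) with hφ
  have hinj : Function.Injective φ := IsFractionRing.injective A (FractionRing A)
  have hne : ∀ i : Fin n, φ (X i) ≠ 0 := fun i => by
    intro hz
    exact X_ne_zero i (hinj (by simpa using hz))
  have h2 : ∏ i, φ (X i) ^ ((c i).toNat) = ∏ i, φ (X i) ^ ((-c i).toNat) := by
    calc ∏ i, φ (X i) ^ ((c i).toNat)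
        = ∏ i, (φ (X i) ^ (c i) * φ (X i) ^ (((-c i).toNat : ℤ))) := by
          refine Finset.prod_congr rfl fun i _ => ?_
          rw [← zpow_add₀ (hne i), ← zpow_natCast]
          congr 1
          omega
      _ = (∏ i, φ (X i) ^ (c i)) * ∏ i, φ (X i) ^ (((-c i).toNat : ℤ)) :=
          Finset.prod_mul_distrib
      _ = ∏ i, φ (X i) ^ ((-c i).toNat) := by
          rw [h, one_mul]
          exact Finset.prod_congr rfl fun i _ => by rw [zpow_natCast]
  have h3 : (∏ i, (X i : A) ^ ((c i).toNat)) = ∏ i, (X i : A) ^ ((-c i).toNat) := by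
    apply hinj
    simpa [map_prod, map_pow] using h2
  -- convert both sides to monomials
  have key : ∀ e : Fin n → ℕ, (∏ i, (X i : A) ^ (e i)) =
      monomial (Finsupp.equivFunOnFinite.symm e) (1 : K) := by
    intro e
    rw [← prod_X_pow_eq_monomial]
    refine (Finset.prod_subset (Finset.subset_univ _) fun i _ hi => ?_).symm
    have h0 : e i = 0 := Finsupp.notMem_support_iff.mp hi
    rw [h0, pow_zero]
  rw [key, key] at h3
  have h4 := MvPolynomial.monomial_left_injective (one_ne_zero (α := K)) h3
  have h5 : ∀ i, (c i).toNat = (-c i).toNat := fun i => by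
    have := congrArg (fun f => Finsupp.equivFunOnFinite f i) h4
    simpa using this
  intro i
  have := h5 i
  omega

end Aux

section Main

variable {K : Type*} [Field K] {l : ℕ}

lemma phiX_ne_zero {n : ℕ} (i : Fin n) :
    algebraMap (MvPolynomial (Fin n) K) (FractionRing (MvPolynomial (Fin n) K)) (X i) ≠ 0 :=
  fun hz => X_ne_zero i (IsFractionRing.injective (MvPolynomial (Fin n) K)
    (FractionRing (MvPolynomial (Fin n) K)) (by simpa using hz))

lemma psi0_monX (p : Fin l → ℤ) (q : Fin l → ℕ) (v : Fin (2 * l) → ℕ) :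
    psi0 (K := K) p q (monX v) =
      (algebraMap (MvPolynomial (Fin (l + 1)) K)
          (FractionRing (MvPolynomial (Fin (l + 1)) K)) (X 0)) ^
          (∑ k : Fin l, (p k - (q k : ℤ)) * (v (bIdx l k) : ℤ)) *
        ∏ k : Fin l, (algebraMap (MvPolynomial (Fin (l + 1)) K)
          (FractionRing (MvPolynomial (Fin (l + 1)) K)) (X k.succ)) ^
          (v (aIdx l k) + v (bIdx l k)) := by
  set φ := algebraMap (MvPolynomial (Fin (l + 1)) K)
    (FractionRing (MvPolynomial (Fin (l + 1)) K)) with hφ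
  have hγ : φ (X 0) ≠ 0 := phiX_ne_zero 0
  have step : psi0 (K := K) p q (monX v) =
      (∏ k : Fin l, φ (X k.succ) ^ v (aIdx l k)) *
        ∏ k : Fin l, (φ (X 0) ^ (p k - (q k : ℤ)) * φ (X k.succ)) ^ v (bIdx l k) := by
    rw [psi0, monX, map_prod]
    rw [prod_split']
    congr 1
    · refine Finset.prod_congr rfl fun k _ => ?_
      rw [map_pow, aeval_X]
      simp only [Fin.val_mk]
      rw [dif_pos k.isLt]
      simp only [Fin.eta]
      rfl
    · refine Finset.prod_congr rfl fun k _ => ?_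
      rw [map_pow, aeval_X]
      have hk := k.isLt
      simp only [Fin.val_mk]
      rw [dif_neg (show ¬ 2 * l - 1 - (k : ℕ) < l by omega)]
      have h2 : 2 * l - 1 - (2 * l - 1 - (k : ℕ)) = (k : ℕ) := by omega
      simp only [h2, Fin.eta]
      rfl
  rw [step]
  have hb : ∏ k : Fin l, (φ (X 0) ^ (p k - (q k : ℤ)) * φ (X k.succ)) ^ v (bIdx l k) =
      φ (X 0) ^ (∑ k : Fin l, (p k - (q k : ℤ)) * (v (bIdx l k) : ℤ)) *
        ∏ k : Fin l, φ (X k.succ) ^ v (bIdx l k) := by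
    rw [zpow_sum' _ hγ, ← Finset.prod_mul_distrib]
    refine Finset.prod_congr rfl fun k _ => ?_
    rw [mul_pow, ← zpow_natCast (φ (X 0) ^ (p k - (q k : ℤ))), ← zpow_mul]
  rw [hb]
  rw [show ∀ a b c : FractionRing (MvPolynomial (Fin (l + 1)) K),
      a * (b * c) = b * (a * c) from fun a b c => by ring]
  congr 1
  rw [← Finset.prod_mul_distrib]
  exact Finset.prod_congr rfl fun k _ => (pow_add _ _ _).symm

lemma mono_eq_iff (m m' : ℤ) (d d' : Fin l → ℕ) :
    (algebraMap (MvPolynomial (Fin (l + 1)) K)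
        (FractionRing (MvPolynomial (Fin (l + 1)) K)) (X 0)) ^ m *
      ∏ k : Fin l, (algebraMap (MvPolynomial (Fin (l + 1)) K)
        (FractionRing (MvPolynomial (Fin (l + 1)) K)) (X k.succ)) ^ d k =
    (algebraMap (MvPolynomial (Fin (l + 1)) K)
        (FractionRing (MvPolynomial (Fin (l + 1)) K)) (X 0)) ^ m' *
      ∏ k : Fin l, (algebraMap (MvPolynomial (Fin (l + 1)) K)
        (FractionRing (MvPolynomial (Fin (l + 1)) K)) (X k.succ)) ^ d' k ↔
    m = m' ∧ ∀ k, d k = d' k := by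
  set φ := algebraMap (MvPolynomial (Fin (l + 1)) K)
    (FractionRing (MvPolynomial (Fin (l + 1)) K)) with hφ
  have hγ : φ (X 0) ≠ 0 := phiX_ne_zero 0
  have ht : ∀ k : Fin l, φ (X k.succ) ≠ 0 := fun k => phiX_ne_zero _
  constructor
  · intro h
    set c : Fin (l + 1) → ℤ := Fin.cases (m - m') (fun k => (d k : ℤ) - d' k) with hc
    have key : φ (X 0) ^ (m - m') * ∏ k : Fin l, φ (X k.succ) ^ ((d k : ℤ) - d' k) = 1 := by
      have h1 : ∏ k : Fin l, φ (X k.succ) ^ ((d k : ℤ) - d' k) =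
          (∏ k : Fin l, φ (X k.succ) ^ (d k : ℤ)) / ∏ k : Fin l, φ (X k.succ) ^ (d' k : ℤ) := by
        rw [← Finset.prod_div_distrib]
        exact Finset.prod_congr rfl fun k _ => zpow_sub₀ (ht k) _ _
      rw [zpow_sub₀ hγ, h1, div_mul_div_comm, div_eq_one_iff_eq
        (mul_ne_zero (zpow_ne_zero _ hγ) (Finset.prod_ne_zero_iff.mpr
          fun k _ => zpow_ne_zero _ (ht k)))]
      simpa [zpow_natCast] using h
    have hprod : ∏ i : Fin (l + 1), φ (X i) ^ (c i) = 1 := by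
      rw [Fin.prod_univ_succ]
      simpa [hc] using key
    have hzero := indep' c hprod
    have h0 := hzero 0
    simp only [hc, Fin.cases_zero] at h0
    refine ⟨by omega, fun k => ?_⟩
    have hk := hzero k.succ
    simp only [hc, Fin.cases_succ] at hk
    omega
  · rintro ⟨rfl, hd⟩
    congr 1
    exact Finset.prod_congr rfl fun k _ => by rw [hd k]

lemma zeta_bIdx (p : Fin l → ℤ) (q : Fin l → ℕ) (k : Fin l) :
    zeta p q (bIdx l k) = (q k : ℤ) - p k := by
  have hk := k.isLt
  simp only [zeta, bIdx, Fin.val_mk]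
  refine (dif_neg (show ¬ 2 * l - 1 - (k : ℕ) < l by omega)).trans ?_
  have h2 : 2 * l - 1 - (2 * l - 1 - (k : ℕ)) = (k : ℕ) := by omega
  simp only [h2, Fin.eta]

end Main

theorem stmt8 {K : Type*} [Field K] {l : ℕ} (hl : 0 < l) (p : Fin l → ℤ) (q : Fin l → ℕ)
    (hp : ∀ k, -1 ≤ p k) (hpq : ∀ k, 0 ≤ p k + (q k : ℤ))
    (hdist : Function.Injective fun k => (p k, q k))
    (α β : Fin (2 * l) → ℕ) :
    psi0 (K := K) p q (monX α - monX β) = 0 ↔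
      ((∀ k : Fin l, α (aIdx l k) + α (bIdx l k) = β (aIdx l k) + β (bIdx l k)) ∧
        ∑ k : Fin l, zeta p q (bIdx l k) * (α (bIdx l k) : ℤ) =
          ∑ k : Fin l, zeta p q (bIdx l k) * (β (bIdx l k) : ℤ)) := by
  rw [map_sub, sub_eq_zero, psi0_monX, psi0_monX, mono_eq_iff]
  have hz : ∀ v : Fin (2 * l) → ℕ,
      ∑ k : Fin l, zeta p q (bIdx l k) * (v (bIdx l k) : ℤ) =
        -∑ k : Fin l, (p k - (q k : ℤ)) * (v (bIdx l k) : ℤ) := by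
    intro v
    rw [← Finset.sum_neg_distrib]
    exact Finset.sum_congr rfl fun k _ => by rw [zeta_bIdx]; ring
  rw [hz α, hz β]
  constructor
  · rintro ⟨hE, hD⟩
    exact ⟨hD, by rw [hE]⟩
  · rintro ⟨hD, hE⟩
    exact ⟨neg_injective hE, hD⟩
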